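/- Let R be a PID with countably generated fraction field Q = S⁻¹R for a countable multiplicative set S = {s_i : i ∈ ω} with s₀ = 1, and set q_n = ∏_{i≤n} s_i. If R is not a field then ⋂_{n∈ω} q_n R = 0, i.e. the S-adic topology on R is Hausdorff. -/

import Mathlib

/-- Let `R` be a PID (not a field) whose fraction field `Q` is `S⁻¹R` for a
countable multiplicative set `S = {s_i : i ∈ ω}` with `s₀ = 1`, and set
`q_n = ∏_{i ≤ n} s_i`. Then `⋂_{n} q_n R = 0`, i.e. the `S`-adic topology
on `R` is Hausdorff. -/
theorem s_adic_topology_hausdorff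
    (R : Type*) [CommRing R] [IsDomain R] [IsPrincipalIdealRing R]
    (hR : ¬ IsField R)
    (S : Submonoid R) (hS0 : (0 : R) ∉ S)
    (hloc : IsLocalization S (FractionRing R))
    (s : ℕ → R) (hrange : Set.range s = (S : Set R)) (hs0 : s 0 = 1)
    (q : ℕ → R) (hq : ∀ n, q n = ∏ i ∈ Finset.range (n + 1), s i) :
    (⨅ n : ℕ, Ideal.span {q n}) = ⊥ := by
  -- get a prime element p of R
  obtain ⟨I, hIbot, hIprime⟩ := (Ring.not_isField_iff_exists_prime).mp hR
  have hp : Prime (Submodule.IsPrincipal.generator I) :=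
    Submodule.IsPrincipal.prime_generator_of_isPrime I hIbot
  set p := Submodule.IsPrincipal.generator I with hpdef
  -- p divides some element of S
  obtain ⟨⟨r, t⟩, hrt⟩ :=
    IsLocalization.surj S ((algebraMap R (FractionRing R) p)⁻¹)
  have hp0 : algebraMap R (FractionRing R) p ≠ 0 := by
    simpa using hp.ne_zero
  have hdvd : p ∣ (t : R) := by
    refine ⟨r, ?_⟩
    have : algebraMap R (FractionRing R) (t : R) =
        algebraMap R (FractionRing R) (p * r) := by
      have := congrArg (fun z => algebraMap R (FractionRing R) p * z) hrt
      simp only [map_mul] at this ⊢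
      field_simp at this
      linear_combination this
    exact (IsFractionRing.injective R (FractionRing R)) this
  -- p^m divides x for all m, for any x in the intersection
  rw [eq_bot_iff]
  intro x hx
  rw [Submodule.mem_bot]
  by_contra hx0
  obtain ⟨n, hn⟩ := FiniteMultiplicity.of_prime_left hp hx0
  apply hn
  -- t^(n+1) ∈ S, so t^(n+1) = s k for some k
  have htS : ((t : R)) ^ (n + 1) ∈ S := pow_mem t.2 (n + 1)
  have : (t : R) ^ (n + 1) ∈ Set.range s := by rw [hrange]; exact htS
  obtain ⟨k, hk⟩ := this
  have hq_dvd_x : q k ∣ x := by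
    have := Submodule.mem_iInf (fun n : ℕ => Ideal.span {q n}) |>.mp hx k
    rwa [Ideal.mem_span_singleton] at this
  have hsk_dvd : s k ∣ q k := by
    rw [hq k]
    exact Finset.dvd_prod_of_mem s (Finset.self_mem_range_succ k)
  calc p ^ (n + 1) ∣ (t : R) ^ (n + 1) := pow_dvd_pow_of_dvd hdvd _
    _ = s k := hk.symm
    _ ∣ q k := hsk_dvd
    _ ∣ x := hq_dvd_x
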